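/- Let G = Z^n ⋊_φ Z with u = w t^s, v = x t^s, s ≠ 0, and suppose det(Id_n − φ^s) ≠ 0. Then u and v are conjugate in G if and only if for some e ∈ {0,...,|s|−1}, the rational vector (Id_n − φ^s)^{-1}(x − φ^e(w)) has integer entries. -/

import Mathlib

open Matrix

def mAut {n : ℕ} (M : (Matrix (Fin n) (Fin n) ℤ)ˣ) : (Fin n → ℤ) ≃+ (Fin n → ℤ) where
  toFun v := (M : Matrix (Fin n) (Fin n) ℤ) *ᵥ v
  invFun v := (↑M⁻¹ : Matrix (Fin n) (Fin n) ℤ) *ᵥ v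
  left_inv v := by simp [Matrix.mulVec_mulVec]
  right_inv v := by simp [Matrix.mulVec_mulVec]
  map_add' u v := by simp [Matrix.mulVec_add]

def tAct {n : ℕ} (M : (Matrix (Fin n) (Fin n) ℤ)ˣ) :
    Multiplicative ℤ →* MulAut (Multiplicative (Fin n → ℤ)) :=
  zpowersHom _ (AddEquiv.toMultiplicative (mAut M))

abbrev G (n : ℕ) (M : (Matrix (Fin n) (Fin n) ℤ)ˣ) :=
  SemidirectProduct (Multiplicative (Fin n → ℤ)) (Multiplicative ℤ) (tAct M)

def nf {n : ℕ} (M : (Matrix (Fin n) (Fin n) ℤ)ˣ) (w : Fin n → ℤ) (k : ℤ) : G n M :=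
  SemidirectProduct.inl (Multiplicative.ofAdd w) * SemidirectProduct.inr (Multiplicative.ofAdd k)

section Aux

variable {n : ℕ} (M : (Matrix (Fin n) (Fin n) ℤ)ˣ)

lemma pow_key : ∀ (k : ℤ) (v : Fin n → ℤ),
    ((AddEquiv.toMultiplicative (mAut M)) ^ k) (Multiplicative.ofAdd v)
      = Multiplicative.ofAdd ((↑(M ^ k) : Matrix (Fin n) (Fin n) ℤ) *ᵥ v) := by
  intro k
  induction k using Int.induction_on with
  | zero => intro v; simp
  | succ k ih =>
      intro v
      rw [_root_.zpow_add_one, MulAut.mul_apply]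
      have h1 : (AddEquiv.toMultiplicative (mAut M)) (Multiplicative.ofAdd v)
          = Multiplicative.ofAdd ((↑M : Matrix (Fin n) (Fin n) ℤ) *ᵥ v) := rfl
      rw [h1, ih, mulVec_mulVec, ← Units.val_mul, ← _root_.zpow_add_one]
  | pred k ih =>
      intro v
      rw [_root_.zpow_sub_one, MulAut.mul_apply]
      have h1 : ((AddEquiv.toMultiplicative (mAut M))⁻¹) (Multiplicative.ofAdd v)
          = Multiplicative.ofAdd ((↑M⁻¹ : Matrix (Fin n) (Fin n) ℤ) *ᵥ v) := rfl
      rw [h1, ih, mulVec_mulVec, ← Units.val_mul, ← _root_.zpow_sub_one]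

lemma tAct_apply (k : Multiplicative ℤ) (v : Multiplicative (Fin n → ℤ)) :
    tAct M k v = Multiplicative.ofAdd
      ((↑(M ^ (Multiplicative.toAdd k)) : Matrix (Fin n) (Fin n) ℤ) *ᵥ Multiplicative.toAdd v) := by
  have : tAct M k = (AddEquiv.toMultiplicative (mAut M)) ^ (Multiplicative.toAdd k) := by
    simp [tAct]
  rw [this, ← ofAdd_toAdd v, pow_key]; simp

lemma nf_left (w : Fin n → ℤ) (k : ℤ) : (nf M w k).left = Multiplicative.ofAdd w := by
  simp [nf, SemidirectProduct.mul_left]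

lemma nf_right (w : Fin n → ℤ) (k : ℤ) : (nf M w k).right = Multiplicative.ofAdd k := by
  simp [nf, SemidirectProduct.mul_right]

lemma conj_char (w x : Fin n → ℤ) (s : ℤ) :
    IsConj (nf M w s) (nf M x s) ↔
      ∃ m : ℤ, ∃ c : Fin n → ℤ,
        ((1 : Matrix (Fin n) (Fin n) ℤ) - (↑(M ^ s) : Matrix (Fin n) (Fin n) ℤ)) *ᵥ c
          = x - (↑(M ^ m) : Matrix (Fin n) (Fin n) ℤ) *ᵥ w := by
  rw [isConj_iff]
  have sub_iff : ∀ (m : ℤ) (c : Fin n → ℤ),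
      (((1 : Matrix (Fin n) (Fin n) ℤ) - (↑(M ^ s) : Matrix (Fin n) (Fin n) ℤ)) *ᵥ c
          = x - (↑(M ^ m) : Matrix (Fin n) (Fin n) ℤ) *ᵥ w)
        ↔ (c + (↑(M ^ m) : Matrix (Fin n) (Fin n) ℤ) *ᵥ w
          = x + (↑(M ^ s) : Matrix (Fin n) (Fin n) ℤ) *ᵥ c) := by
    intro m c
    rw [sub_mulVec, one_mulVec, sub_eq_sub_iff_add_eq_add]
  constructor
  · rintro ⟨g, hg⟩
    rw [mul_inv_eq_iff_eq_mul, SemidirectProduct.ext_iff] at hg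
    obtain ⟨h1, _⟩ := hg
    simp only [SemidirectProduct.mul_left, nf_left, nf_right, tAct_apply, toAdd_ofAdd] at h1
    have h2 := congrArg Multiplicative.toAdd h1
    simp only [toAdd_mul, toAdd_ofAdd] at h2
    refine ⟨Multiplicative.toAdd g.right, Multiplicative.toAdd g.left, ?_⟩
    rw [sub_iff]
    exact h2
  · rintro ⟨m, c, h⟩
    rw [sub_iff] at h
    refine ⟨⟨Multiplicative.ofAdd c, Multiplicative.ofAdd m⟩, ?_⟩
    rw [mul_inv_eq_iff_eq_mul]
    ext : 1
    · simp only [SemidirectProduct.mul_left, nf_left, nf_right, tAct_apply, toAdd_ofAdd]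
      rw [← ofAdd_add, ← ofAdd_add]
      exact congrArg Multiplicative.ofAdd h
    · simp only [SemidirectProduct.mul_right, nf_right]
      exact mul_comm _ _
  
lemma shift_one (w x : Fin n → ℤ) (s m : ℤ)
    (h : ∃ c : Fin n → ℤ,
      ((1 : Matrix (Fin n) (Fin n) ℤ) - (↑(M ^ s) : Matrix (Fin n) (Fin n) ℤ)) *ᵥ c
        = x - (↑(M ^ m) : Matrix (Fin n) (Fin n) ℤ) *ᵥ w) :
    (∃ c : Fin n → ℤ,
      ((1 : Matrix (Fin n) (Fin n) ℤ) - (↑(M ^ s) : Matrix (Fin n) (Fin n) ℤ)) *ᵥ c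
        = x - (↑(M ^ (m + s)) : Matrix (Fin n) (Fin n) ℤ) *ᵥ w) := by
  obtain ⟨c, h⟩ := h
  refine ⟨c + (↑(M ^ m) : Matrix (Fin n) (Fin n) ℤ) *ᵥ w, ?_⟩
  have h2 : ((1 : Matrix (Fin n) (Fin n) ℤ) - (↑(M ^ s) : Matrix (Fin n) (Fin n) ℤ)) *ᵥ
      ((↑(M ^ m) : Matrix (Fin n) (Fin n) ℤ) *ᵥ w)
      = (↑(M ^ m) : Matrix (Fin n) (Fin n) ℤ) *ᵥ w
        - (↑(M ^ (m + s)) : Matrix (Fin n) (Fin n) ℤ) *ᵥ w := by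
    rw [sub_mulVec, one_mulVec, mulVec_mulVec, ← Units.val_mul, add_comm m s, ← _root_.zpow_add]
  rw [mulVec_add, h, h2]
  abel

lemma shift_neg_one (w x : Fin n → ℤ) (s m : ℤ)
    (h : ∃ c : Fin n → ℤ,
      ((1 : Matrix (Fin n) (Fin n) ℤ) - (↑(M ^ s) : Matrix (Fin n) (Fin n) ℤ)) *ᵥ c
        = x - (↑(M ^ m) : Matrix (Fin n) (Fin n) ℤ) *ᵥ w) :
    (∃ c : Fin n → ℤ,
      ((1 : Matrix (Fin n) (Fin n) ℤ) - (↑(M ^ s) : Matrix (Fin n) (Fin n) ℤ)) *ᵥ c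
        = x - (↑(M ^ (m - s)) : Matrix (Fin n) (Fin n) ℤ) *ᵥ w) := by
  obtain ⟨c, h⟩ := h
  refine ⟨c - (↑(M ^ (m - s)) : Matrix (Fin n) (Fin n) ℤ) *ᵥ w, ?_⟩
  have h2 : ((1 : Matrix (Fin n) (Fin n) ℤ) - (↑(M ^ s) : Matrix (Fin n) (Fin n) ℤ)) *ᵥ
      ((↑(M ^ (m - s)) : Matrix (Fin n) (Fin n) ℤ) *ᵥ w)
      = (↑(M ^ (m - s)) : Matrix (Fin n) (Fin n) ℤ) *ᵥ w
        - (↑(M ^ m) : Matrix (Fin n) (Fin n) ℤ) *ᵥ w := by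
    rw [sub_mulVec, one_mulVec, mulVec_mulVec, ← Units.val_mul, ← _root_.zpow_add]
    rw [show s + (m - s) = m by ring]
  rw [mulVec_sub, h, h2]
  abel

lemma shift_any (w x : Fin n → ℤ) (s : ℤ) (j m : ℤ)
    (h : ∃ c : Fin n → ℤ,
      ((1 : Matrix (Fin n) (Fin n) ℤ) - (↑(M ^ s) : Matrix (Fin n) (Fin n) ℤ)) *ᵥ c
        = x - (↑(M ^ m) : Matrix (Fin n) (Fin n) ℤ) *ᵥ w) :
    (∃ c : Fin n → ℤ,
      ((1 : Matrix (Fin n) (Fin n) ℤ) - (↑(M ^ s) : Matrix (Fin n) (Fin n) ℤ)) *ᵥ c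
        = x - (↑(M ^ (m + j * s)) : Matrix (Fin n) (Fin n) ℤ) *ᵥ w) := by
  induction j using Int.induction_on with
  | zero => simpa using h
  | succ k ih =>
      have := shift_one M w x s (m + k * s) ih
      rw [show m + (k : ℤ) * s + s = m + ((k : ℤ) + 1) * s by ring] at this
      exact this
  | pred k ih =>
      have := shift_neg_one M w x s (m + (-k : ℤ) * s) ih
      rw [show m + (-k : ℤ) * s - s = m + ((-k : ℤ) - 1) * s by ring] at this
      exact this

end Aux

/-- For s ≠ 0 and det(Id - φ^s) ≠ 0, u = w t^s and v = x t^s are conjugate in G iff for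
    some e ∈ {0, ..., |s|-1} the rational vector (Id - φ^s)⁻¹(x - φ^e(w)) has integer
    entries. -/
theorem conj_iff_rational_solution_integral {n : ℕ} (M : (Matrix (Fin n) (Fin n) ℤ)ˣ)
    (w x : Fin n → ℤ) (s : ℤ) (hs : s ≠ 0)
    (hdet : ((1 : Matrix (Fin n) (Fin n) ℤ) - (↑(M ^ s) : Matrix (Fin n) (Fin n) ℤ)).det ≠ 0) :
    IsConj (nf M w s) (nf M x s) ↔
      ∃ e : ℤ, 0 ≤ e ∧ e ≤ |s| - 1 ∧ ∃ b : Fin n → ℤ,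
        (fun i => (b i : ℚ)) =
          ((1 : Matrix (Fin n) (Fin n) ℚ)
              - ((↑(M ^ s) : Matrix (Fin n) (Fin n) ℤ)).map (Int.cast : ℤ → ℚ))⁻¹ *ᵥ
            (fun i => ((x - (↑(M ^ e) : Matrix (Fin n) (Fin n) ℤ) *ᵥ w) i : ℚ)) := by
  set A : Matrix (Fin n) (Fin n) ℤ := (1 : Matrix (Fin n) (Fin n) ℤ) - ↑(M ^ s) with hAdef
  set Aq : Matrix (Fin n) (Fin n) ℚ :=
    (1 : Matrix (Fin n) (Fin n) ℚ) - ((↑(M ^ s) : Matrix (Fin n) (Fin n) ℤ)).map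
      (Int.cast : ℤ → ℚ) with hAqdef
  have hA : Aq = A.map (Int.cast : ℤ → ℚ) := by
    ext i j
    simp [hAdef, hAqdef, Matrix.map_apply, Matrix.sub_apply, Matrix.one_apply, apply_ite]
  have hdetQ : Aq.det ≠ 0 := by
    have h1 : Aq.det = ((A.det : ℤ) : ℚ) := by
      rw [hA]; simpa using (RingHom.map_det (Int.castRingHom ℚ) A).symm
    rw [h1]
    exact_mod_cast hdet
  have hu : IsUnit Aq.det := isUnit_iff_ne_zero.mpr hdetQ
  have hcast : ∀ v : Fin n → ℤ,
      (fun i => ((A *ᵥ v) i : ℚ)) = Aq *ᵥ (fun i => (v i : ℚ)) := by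
    intro v
    funext i
    rw [hA]
    exact RingHom.map_mulVec (Int.castRingHom ℚ) A v i
  have rat_iff : ∀ y : Fin n → ℤ,
      ((∃ b : Fin n → ℤ, (fun i => (b i : ℚ)) = Aq⁻¹ *ᵥ (fun i => (y i : ℚ)))
        ↔ ∃ c : Fin n → ℤ, A *ᵥ c = y) := by
    intro y
    constructor
    · rintro ⟨b, hb⟩
      refine ⟨b, ?_⟩
      have h1 : Aq *ᵥ (fun i => (b i : ℚ)) = (fun i => (y i : ℚ)) := by
        rw [hb, mulVec_mulVec, Matrix.mul_nonsing_inv _ hu, one_mulVec]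
      rw [← hcast b] at h1
      funext i
      have := congrFun h1 i
      exact_mod_cast this
    · rintro ⟨c, hc⟩
      refine ⟨c, ?_⟩
      have h1 : (fun i => (y i : ℚ)) = Aq *ᵥ (fun i => (c i : ℚ)) := by
        rw [← hcast c, hc]
      rw [h1, mulVec_mulVec, Matrix.nonsing_inv_mul _ hu, one_mulVec]
  rw [conj_char]
  constructor
  · rintro ⟨m, hm⟩
    have habs : (0 : ℤ) < |s| := abs_pos.mpr hs
    refine ⟨m % |s|, Int.emod_nonneg m habs.ne', ?_, ?_⟩
    · have := Int.emod_lt_of_pos m habs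
      omega
    · rw [rat_iff]
      have hj : ∃ j : ℤ, m % |s| = m + j * s := by
        rcases abs_choice s with h | h
        · exact ⟨-(m / |s|), by rw [Int.emod_def, h]; ring⟩
        · exact ⟨m / |s|, by rw [Int.emod_def, h]; ring⟩
      obtain ⟨j, hj⟩ := hj
      rw [hj]
      exact shift_any M w x s j m hm
  · rintro ⟨e, _, _, hb⟩
    rw [rat_iff] at hb
    exact ⟨e, hb⟩
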